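/- Let E ⊆ ℝⁿ with H^{n-1}(E) = 0 ((n-1)-dimensional Hausdorff measure zero) and let γ be a non-constant rectifiable path in ℝⁿ. Then for Lebesgue-almost every x ∈ ℝⁿ, the translated path γ + x has trace disjoint from E. -/

import Mathlib

open MeasureTheory Set
open scoped ENNReal

/-- A rectifiable curve in `ℝⁿ`, given by its arclength parametrization on `[0, len]`. -/
structure RectCurve (n : ℕ) where
  len : ℝ
  len_nonneg : 0 ≤ len
  toFun : ℝ → EuclideanSpace ℝ (Fin n)
  arclength : ∀ t ∈ Set.Icc 0 len, eVariationOn toFun (Set.Icc 0 t) = ENNReal.ofReal t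

/-- The line integral `∫_γ ρ ds` of a Borel function over a rectifiable curve
(via its arclength parametrization). -/
noncomputable def lineIntegral {n : ℕ} (ρ : EuclideanSpace ℝ (Fin n) → ℝ≥0∞)
    (γ : RectCurve n) : ℝ≥0∞ :=
  ∫⁻ t in Set.Icc 0 γ.len, ρ (γ.toFun t)

/-- A Borel function `ρ ≥ 0` is admissible for a curve family `Γ` if `∫_γ ρ ds ≥ 1`
for every `γ ∈ Γ`. -/
def Admissible {n : ℕ} (ρ : EuclideanSpace ℝ (Fin n) → ℝ≥0∞) (Γ : Set (RectCurve n)) : Prop :=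
  Measurable ρ ∧ ∀ γ ∈ Γ, 1 ≤ lineIntegral ρ γ

/-- The `p`-modulus of a curve family: `inf ∫ ρᵖ` over admissible `ρ`. -/
noncomputable def modulus {n : ℕ} (p : ℝ) (Γ : Set (RectCurve n)) : ℝ≥0∞ :=
  ⨅ (ρ : EuclideanSpace ℝ (Fin n) → ℝ≥0∞) (_ : Admissible ρ Γ), ∫⁻ x, ρ x ^ p

open Metric

lemma rect_lip {n : ℕ} (γ : RectCurve n) {s t : ℝ} (hs : s ∈ Set.Icc 0 γ.len)
    (ht : t ∈ Set.Icc 0 γ.len) : dist (γ.toFun s) (γ.toFun t) ≤ |s - t| := by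
  wlog hst : s ≤ t generalizing s t
  · rw [dist_comm, abs_sub_comm]; exact this ht hs (le_of_not_ge hst)
  have key : eVariationOn γ.toFun (Set.Icc 0 s) + eVariationOn γ.toFun (Set.Icc s t)
      = eVariationOn γ.toFun (Set.Icc 0 t) := by
    have h := eVariationOn.Icc_add_Icc γ.toFun (s := Set.univ) hs.1 hst (Set.mem_univ s)
    simpa using h
  rw [γ.arclength s hs, γ.arclength t ht] at key
  have h1 : ENNReal.ofReal t = ENNReal.ofReal s + ENNReal.ofReal (t - s) := by
    rw [← ENNReal.ofReal_add hs.1 (by linarith)]; ring_nf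
  rw [h1] at key
  have hV : eVariationOn γ.toFun (Set.Icc s t) = ENNReal.ofReal (t - s) :=
    (ENNReal.add_right_inj (by simp)).mp key
  have hed := eVariationOn.edist_le γ.toFun (s := Set.Icc s t) (x := s) (y := t)
    ⟨le_refl s, hst⟩ ⟨hst, le_refl t⟩
  rw [hV] at hed
  rw [abs_sub_comm, abs_of_nonneg (by linarith)]
  exact (edist_le_ofReal (by linarith)).mp hed

lemma aux_add_pow_le (k : ℕ) {a b : ℝ} (ha : 0 ≤ a) (hb : 0 ≤ b) :
    (a + b) ^ k ≤ 2 ^ k * (a ^ k + b ^ k) := by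
  have h1 : a + b ≤ 2 * max a b := by
    rcases le_total a b with h | h
    · rw [max_eq_right h]; linarith
    · rw [max_eq_left h]; linarith
  calc (a + b) ^ k ≤ (2 * max a b) ^ k := pow_le_pow_left₀ (by linarith) h1 k
    _ = 2 ^ k * max a b ^ k := mul_pow _ _ _
    _ ≤ 2 ^ k * (a ^ k + b ^ k) := by
        have : max a b ^ k ≤ a ^ k + b ^ k := by
          rcases le_total a b with h | h
          · rw [max_eq_right h]; exact le_add_of_nonneg_left (pow_nonneg ha k)
          · rw [max_eq_left h]; exact le_add_of_nonneg_right (pow_nonneg hb k)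
        exact mul_le_mul_of_nonneg_left this (by positivity)

lemma rect_cover {n : ℕ} (hn : 2 ≤ n) (E : Set (EuclideanSpace ℝ (Fin n)))
    (hE : μH[(n : ℝ) - 1] E = 0) (γ : RectCurve n) :
    volume {x : EuclideanSpace ℝ (Fin n) | ∃ s ∈ Set.Icc 0 γ.len, γ.toFun s + x ∈ E} = 0 := by
  obtain ⟨k, hk, rfl⟩ : ∃ k, 1 ≤ k ∧ n = k + 1 := ⟨n - 1, by omega, by omega⟩
  have hE' : μH[(k : ℝ)] E = 0 := by
    have hcast : ((k + 1 : ℕ) : ℝ) - 1 = (k : ℝ) := by push_cast; ring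
    rwa [hcast] at hE
  classical
  set L := γ.len with hL
  have hL0 : 0 ≤ L := γ.len_nonneg
  set c := γ.toFun with hc
  set V := volume (Metric.ball (0 : EuclideanSpace ℝ (Fin (k + 1))) 1) with hV
  have hV0 : V ≠ 0 := (measure_ball_pos _ _ one_pos).ne'
  have hVt : V ≠ ⊤ := measure_ball_lt_top.ne
  set B := {x : EuclideanSpace ℝ (Fin (k + 1)) | ∃ s ∈ Set.Icc 0 L, c s + x ∈ E} with hB
  set C : ℝ≥0∞ := ENNReal.ofReal (2 ^ (k+1) * (L + 2)) * V * 2 ^ (k + 1) with hC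
  have hC0 : C ≠ 0 := by
    rw [hC]
    refine mul_ne_zero (mul_ne_zero ?_ hV0) (by positivity)
    exact (ENNReal.ofReal_pos.mpr (by positivity)).ne'
  have hCt : C ≠ ⊤ := by
    rw [hC]
    exact ENNReal.mul_ne_top (ENNReal.mul_ne_top ENNReal.ofReal_ne_top hVt)
      (by simp [ENNReal.pow_ne_top])
  show volume B = 0
  refine le_antisymm ?_ (zero_le)
  refine ENNReal.le_of_forall_pos_le_add fun ε hε _ => ?_
  rw [zero_add]
  set ε₁ : ℝ≥0∞ := (ε : ℝ≥0∞) / C with hε₁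
  have hε₁0 : 0 < ε₁ := ENNReal.div_pos (by exact_mod_cast hε.ne') hCt
  have hε₁t : ε₁ ≠ ⊤ := (ENNReal.div_lt_top ENNReal.coe_ne_top hC0).ne
  -- extract an efficient cover of E
  obtain ⟨t, ht_cover, ht_diam, ht_sum⟩ :
      ∃ t : ℕ → Set (EuclideanSpace ℝ (Fin (k + 1))), (E ⊆ ⋃ i, t i) ∧ (∀ i, EMetric.diam (t i) ≤ 1) ∧
        (∑' i, ⨆ _ : (t i).Nonempty, EMetric.diam (t i) ^ (k:ℝ)) < ε₁ := by
    have h0 : (⨅ (t : ℕ → Set (EuclideanSpace ℝ (Fin (k + 1)))) (_ : E ⊆ ⋃ i, t i) (_ : ∀ i, EMetric.diam (t i) ≤ 1),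
        ∑' i, ⨆ _ : (t i).Nonempty, EMetric.diam (t i) ^ (k:ℝ)) = 0 := by
      refine le_antisymm ?_ (zero_le)
      rw [← hE', Measure.hausdorffMeasure_apply]
      exact le_iSup_of_le 1 (le_iSup_of_le one_pos le_rfl)
    have h2 : (⨅ (t : ℕ → Set (EuclideanSpace ℝ (Fin (k + 1)))) (_ : E ⊆ ⋃ i, t i) (_ : ∀ i, EMetric.diam (t i) ≤ 1),
        ∑' i, ⨆ _ : (t i).Nonempty, EMetric.diam (t i) ^ (k:ℝ)) < ε₁ := h0.le.trans_lt hε₁0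
    rw [iInf_lt_iff] at h2; obtain ⟨t, h2⟩ := h2
    rw [iInf_lt_iff] at h2; obtain ⟨h3, h2⟩ := h2
    rw [iInf_lt_iff] at h2; obtain ⟨h4, h2⟩ := h2
    exact ⟨t, h3, h4, h2⟩
  -- auxiliary data
  set η : ℝ := min 1 (ε₁.toReal / 2) with hη
  have hε₁tr : 0 < ε₁.toReal := ENNReal.toReal_pos hε₁0.ne' hε₁t
  have hη0 : 0 < η := lt_min one_pos (by positivity)
  have hη1 : η ≤ 1 := min_le_left _ _
  have hηε : ENNReal.ofReal η * 2 ≤ ε₁ := by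
    have h5 : ENNReal.ofReal η ≤ ε₁ / 2 := by
      calc ENNReal.ofReal η ≤ ENNReal.ofReal (ε₁.toReal / 2) :=
            ENNReal.ofReal_le_ofReal (min_le_right _ _)
        _ = ε₁ / 2 := by
            rw [ENNReal.ofReal_div_of_pos two_pos, ENNReal.ofReal_toReal hε₁t]
            norm_num
    calc ENNReal.ofReal η * 2 ≤ ε₁ / 2 * 2 := by gcongr
      _ = ε₁ := ENNReal.div_mul_cancel two_ne_zero ENNReal.ofNat_ne_top
  set d : ℕ → ℝ := fun i => (EMetric.diam (t i)).toReal with hd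
  have hd0 : ∀ i, 0 ≤ d i := fun i => ENNReal.toReal_nonneg
  have hdiam_ne : ∀ i, EMetric.diam (t i) ≠ ⊤ :=
    fun i => ((ht_diam i).trans_lt ENNReal.one_lt_top).ne
  have hd1 : ∀ i, d i ≤ 1 := fun i => by
    have h6 := ENNReal.toReal_mono ENNReal.one_ne_top (ht_diam i)
    simpa using h6
  set r : ℕ → ℝ := fun i => d i + η * 2⁻¹ ^ i with hr
  have hpowpos : ∀ i : ℕ, (0:ℝ) < 2⁻¹ ^ i := fun i => pow_pos (by norm_num) i
  have hr0 : ∀ i, 0 < r i := fun i => by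
    have := hd0 i; have := hpowpos i; rw [hr]; positivity
  have hr2 : ∀ i, r i ≤ 2 := fun i => by
    have h7 : (2⁻¹:ℝ) ^ i ≤ 1 := pow_le_one₀ (by norm_num) (by norm_num)
    have h8 : η * 2⁻¹ ^ i ≤ 1 := by nlinarith [hpowpos i]
    have := hd1 i; rw [hr]; dsimp only; linarith
  set y : ℕ → EuclideanSpace ℝ (Fin (k + 1)) := fun i => if h : (t i).Nonempty then h.some else 0 with hy
  set N : ℕ → ℕ := fun i => ⌊L / r i⌋₊ with hN
  -- the covering of B by balls
  have hBsub : B ⊆ ⋃ i, ⋃ j ∈ Finset.range (N i + 1),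
      Metric.closedBall (y i - c ((j:ℝ) * r i)) (2 * r i) := by
    rintro x ⟨s, hsI, hsE⟩
    obtain ⟨i, hi⟩ := Set.mem_iUnion.mp (ht_cover hsE)
    have hne : (t i).Nonempty := ⟨_, hi⟩
    have hyi : y i ∈ t i := by rw [hy]; dsimp only; rw [dif_pos hne]; exact hne.some_mem
    have h1 : dist (c s + x) (y i) ≤ r i := by
      have he : edist (c s + x) (y i) ≤ ENNReal.ofReal (r i) := by
        calc edist (c s + x) (y i) ≤ EMetric.diam (t i) := EMetric.edist_le_diam_of_mem hi hyi
          _ = ENNReal.ofReal (d i) := (ENNReal.ofReal_toReal (hdiam_ne i)).symm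
          _ ≤ ENNReal.ofReal (r i) := ENNReal.ofReal_le_ofReal
              (by rw [hr]; dsimp only; nlinarith [hpowpos i])
      exact (edist_le_ofReal (hr0 i).le).mp he
    set j : ℕ := ⌊s / r i⌋₊ with hj
    have hjr_le : (j:ℝ) * r i ≤ s := by
      have h9 := Nat.floor_le (div_nonneg hsI.1 (hr0 i).le)
      calc (j:ℝ) * r i ≤ s / r i * r i := mul_le_mul_of_nonneg_right h9 (hr0 i).le
        _ = s := div_mul_cancel₀ s (hr0 i).ne'
    have hjr_mem : (j:ℝ) * r i ∈ Set.Icc 0 L :=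
      ⟨by positivity, hjr_le.trans hsI.2⟩
    have hs_lt : s - (j:ℝ) * r i ≤ r i := by
      have h10 := Nat.lt_floor_add_one (s / r i)
      have h11 : s < ((j:ℝ) + 1) * r i := by
        rw [hj]; exact (div_lt_iff₀ (hr0 i)).mp h10
      nlinarith [hr0 i]
    have h3 : dist (c s) (c ((j:ℝ) * r i)) ≤ r i := by
      have h12 := rect_lip γ hsI hjr_mem
      rw [abs_of_nonneg (by linarith)] at h12
      linarith
    have hjN : j ∈ Finset.range (N i + 1) := by
      rw [Finset.mem_range, Nat.lt_succ_iff, hN]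
      exact Nat.floor_le_floor (by gcongr; exact hsI.2)
    refine Set.mem_iUnion.mpr ⟨i, Set.mem_biUnion hjN ?_⟩
    rw [Metric.mem_closedBall, dist_eq_norm]
    have hxe : x - (y i - c ((j:ℝ) * r i)) = (c s + x - y i) + (c ((j:ℝ) * r i) - c s) := by
      abel
    rw [hxe]
    calc ‖(c s + x - y i) + (c ((j:ℝ) * r i) - c s)‖
        ≤ ‖c s + x - y i‖ + ‖c ((j:ℝ) * r i) - c s‖ := norm_add_le _ _
      _ ≤ r i + r i := by
          rw [← dist_eq_norm, ← dist_eq_norm]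
          exact add_le_add h1 (by rw [dist_comm]; exact h3)
      _ = 2 * r i := by ring
  have hball : ∀ (z : EuclideanSpace ℝ (Fin (k+1))) (i : ℕ),
      volume (Metric.closedBall z (2 * r i)) = ENNReal.ofReal ((2 * r i) ^ (k+1)) * V := by
    intro z i
    rw [Measure.addHaar_closedBall _ _ (by positivity : (0:ℝ) ≤ 2 * r i),
      finrank_euclideanSpace_fin]
  have hkey : ∀ i, (↑(N i + 1) : ℝ≥0∞) * ENNReal.ofReal ((2 * r i) ^ (k+1))
      ≤ ENNReal.ofReal (2 ^ (k+1) * (L + 2)) * ENNReal.ofReal (r i ^ k) := by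
    intro i
    rw [← ENNReal.ofReal_natCast, ← ENNReal.ofReal_mul (by positivity),
      ← ENNReal.ofReal_mul (by positivity)]
    apply ENNReal.ofReal_le_ofReal
    have hNle : (N i : ℝ) ≤ L / r i := Nat.floor_le (div_nonneg hL0 (hr0 i).le)
    have hrpos := hr0 i
    have e1 : ((N i + 1 : ℕ) : ℝ) * (2 * r i) ^ (k+1)
        ≤ (L / r i + 1) * (2 ^ (k+1) * r i ^ (k+1)) := by
      rw [mul_pow]
      push_cast
      apply mul_le_mul_of_nonneg_right (by linarith) (by positivity)
    refine e1.trans ?_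
    have e2 : (L / r i + 1) * (2 ^ (k+1) * r i ^ (k+1))
        = 2 ^ (k+1) * (L * r i ^ k + r i * r i ^ k) := by
      field_simp
      ring
    rw [e2]
    have e3 : r i * r i ^ k ≤ 2 * r i ^ k :=
      mul_le_mul_of_nonneg_right (hr2 i) (by positivity)
    calc 2 ^ (k+1) * (L * r i ^ k + r i * r i ^ k)
        ≤ 2 ^ (k+1) * (L * r i ^ k + 2 * r i ^ k) := by
          apply mul_le_mul_of_nonneg_left _ (by positivity)
          linarith
      _ = 2 ^ (k+1) * (L + 2) * r i ^ k := by ring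
  have hsum : (∑' i, ENNReal.ofReal (r i ^ k)) ≤ 2 ^ (k+1) * ε₁ := by
    have hper : ∀ i, ENNReal.ofReal (r i ^ k)
        ≤ ENNReal.ofReal (2 ^ k) * (ENNReal.ofReal (d i ^ k)
          + ENNReal.ofReal ((η * 2⁻¹ ^ i) ^ k)) := by
      intro i
      rw [← ENNReal.ofReal_add (by positivity) (by positivity),
        ← ENNReal.ofReal_mul (by positivity)]
      exact ENNReal.ofReal_le_ofReal (aux_add_pow_le k (hd0 i) (by positivity))
    have hS1 : (∑' i, ENNReal.ofReal (d i ^ k)) ≤ ε₁ := by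
      refine le_trans (ENNReal.tsum_le_tsum fun i => ?_) ht_sum.le
      by_cases hne : (t i).Nonempty
      · refine le_trans (le_of_eq ?_) (le_iSup_of_le hne le_rfl)
        rw [ENNReal.ofReal_pow (hd0 i)]
        rw [hd]
        rw [ENNReal.ofReal_toReal (hdiam_ne i), ← ENNReal.rpow_natCast]
      · rw [Set.not_nonempty_iff_eq_empty] at hne
        have : d i = 0 := by rw [hd]; simp [hne, EMetric.diam]
        simp [this, zero_pow (by omega : k ≠ 0)]
    have hS2 : (∑' i, ENNReal.ofReal ((η * 2⁻¹ ^ i) ^ k)) ≤ ε₁ := by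
      refine le_trans ?_ hηε
      have hper2 : ∀ i : ℕ, ENNReal.ofReal ((η * 2⁻¹ ^ i) ^ k)
          ≤ ENNReal.ofReal η * (ENNReal.ofReal 2⁻¹) ^ i := by
        intro i
        rw [← ENNReal.ofReal_pow (by norm_num), ← ENNReal.ofReal_mul hη0.le]
        apply ENNReal.ofReal_le_ofReal
        apply pow_le_of_le_one (by positivity) _ (by omega)
        have h13 := (hpowpos i).le
        nlinarith [pow_le_one₀ (by norm_num : (0:ℝ) ≤ 2⁻¹)
          (by norm_num : (2⁻¹:ℝ) ≤ 1) (n := i)]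
      refine le_trans (ENNReal.tsum_le_tsum hper2) ?_
      rw [ENNReal.tsum_mul_left, ENNReal.tsum_geometric]
      have h14 : ENNReal.ofReal 2⁻¹ = 2⁻¹ := by
        rw [ENNReal.ofReal_inv_of_pos two_pos]; norm_num
      rw [h14, ENNReal.one_sub_inv_two, inv_inv]
    calc (∑' i, ENNReal.ofReal (r i ^ k)) ≤ ∑' i, ENNReal.ofReal (2 ^ k) *
          (ENNReal.ofReal (d i ^ k) + ENNReal.ofReal ((η * 2⁻¹ ^ i) ^ k)) :=
        ENNReal.tsum_le_tsum hper
      _ = ENNReal.ofReal (2 ^ k) * ((∑' i, ENNReal.ofReal (d i ^ k))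
          + ∑' i, ENNReal.ofReal ((η * 2⁻¹ ^ i) ^ k)) := by
          rw [ENNReal.tsum_mul_left, ENNReal.tsum_add]
      _ ≤ ENNReal.ofReal (2 ^ k) * (ε₁ + ε₁) := by gcongr
      _ ≤ 2 ^ (k+1) * ε₁ := by
          have h2 : ENNReal.ofReal (2:ℝ) = 2 := by norm_num
          rw [ENNReal.ofReal_pow (by norm_num), h2, pow_succ]
          calc (2:ℝ≥0∞) ^ k * (ε₁ + ε₁) = 2 ^ k * 2 * ε₁ := by ring
            _ ≤ _ := le_rfl
  calc volume B
      ≤ volume (⋃ i, ⋃ j ∈ Finset.range (N i + 1),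
          Metric.closedBall (y i - c ((j:ℝ) * r i)) (2 * r i)) := measure_mono hBsub
    _ ≤ ∑' i, volume (⋃ j ∈ Finset.range (N i + 1),
          Metric.closedBall (y i - c ((j:ℝ) * r i)) (2 * r i)) := measure_iUnion_le _
    _ ≤ ∑' i, (↑(N i + 1) : ℝ≥0∞) * (ENNReal.ofReal ((2 * r i) ^ (k+1)) * V) := by
        refine ENNReal.tsum_le_tsum fun i => ?_
        refine le_trans (measure_biUnion_finset_le _ _) ?_
        rw [Finset.sum_congr rfl (fun j _ => hball _ i), Finset.sum_const,
          Finset.card_range, nsmul_eq_mul]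
    _ ≤ ∑' i, ENNReal.ofReal (2 ^ (k+1) * (L + 2)) * ENNReal.ofReal (r i ^ k) * V := by
        refine ENNReal.tsum_le_tsum fun i => ?_
        calc (↑(N i + 1) : ℝ≥0∞) * (ENNReal.ofReal ((2 * r i) ^ (k+1)) * V)
            = (↑(N i + 1) : ℝ≥0∞) * ENNReal.ofReal ((2 * r i) ^ (k+1)) * V := by ring
          _ ≤ ENNReal.ofReal (2 ^ (k+1) * (L + 2)) * ENNReal.ofReal (r i ^ k) * V :=
            mul_le_mul_left (hkey i) V
    _ = ENNReal.ofReal (2 ^ (k+1) * (L + 2)) * (∑' i, ENNReal.ofReal (r i ^ k)) * V := by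
        rw [ENNReal.tsum_mul_right, ENNReal.tsum_mul_left]
    _ ≤ ENNReal.ofReal (2 ^ (k+1) * (L + 2)) * (2 ^ (k+1) * ε₁) * V := by gcongr
    _ = C * ε₁ := by rw [hC]; ring
    _ ≤ ↑ε := by rw [hε₁]; exact ENNReal.mul_div_le

theorem stmt_10 {n : ℕ} (E : Set (EuclideanSpace ℝ (Fin n)))
    (hE : μH[(n : ℝ) - 1] E = 0) (γ : RectCurve n) (hγ : 0 < γ.len) :
    ∀ᵐ x ∂(volume : Measure (EuclideanSpace ℝ (Fin n))),
      E ∩ (fun t => γ.toFun t + x) '' Set.Icc 0 γ.len = ∅ := by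
  rcases Nat.lt_or_ge n 2 with hn | hn
  · interval_cases n
    · -- n = 0 : impossible, curves in a subsingleton space have zero length
      exfalso
      have hsub : Subsingleton (EuclideanSpace ℝ (Fin 0)) :=
        by infer_instance
      have h := γ.arclength γ.len ⟨γ.len_nonneg, le_refl _⟩
      rw [eVariationOn.constant_on (Set.subsingleton_of_subsingleton)] at h
      have := ENNReal.ofReal_eq_zero.mp h.symm
      linarith
    · -- n = 1 : `μH[0] E = 0` forces `E = ∅`
      have hE0 : E = ∅ := by
        by_contra h
        obtain ⟨x, hx⟩ := Set.nonempty_iff_ne_empty.mpr h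
        have hc : ((1 : ℕ) : ℝ) - 1 = 0 := by norm_num
        rw [hc] at hE
        have h1 : μH[(0:ℝ)] ({x} : Set (EuclideanSpace ℝ (Fin 1))) ≤ 0 :=
          hE ▸ measure_mono (Set.singleton_subset_iff.mpr hx)
        rw [Measure.hausdorffMeasure_zero_singleton] at h1
        simp at h1
      simp [hE0]
  · rw [MeasureTheory.ae_iff]
    refine measure_mono_null ?_ (rect_cover hn E hE γ)
    intro x hx
    simp only [Set.mem_setOf_eq] at hx ⊢
    obtain ⟨y, hyE, s, hsI, rfl⟩ := Set.nonempty_iff_ne_empty.mpr hx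
    exact ⟨s, hsI, hyE⟩
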